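/- A spinor field κ_A satisfies the twistor equation ∇_{A'(A}κ_{B)} = 0 if and only if it satisfies the pair of equations ∇κ_B + (2/3)∇_B{}^{Q}κ_Q = 0 and ∇_{(AB}κ_{C)} = 0; moreover, the second of these is equivalent to the spatial twistor equation D_{(AB}κ_{C)} − (1/2)K_{Q(ABC)}κ^{Q} = 0, which is intrinsic to the leaves of the foliation. -/

import Mathlib

noncomputable section

/-- Component index type for 2-spinors. -/
abbrev Ix := Fin 2

/-- The antisymmetric spinor metric ε_{AB} (components). -/
def eps : Ix → Ix → ℂ := fun A B =>
  if A = 0 ∧ B = 1 then 1 else if A = 1 ∧ B = 0 then -1 else 0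

/-- Spinor fields on `M` with `k` unprimed and `l` primed component indices. -/
abbrev SpF (M : Type) (k l : ℕ) : Type := M → (Fin k → Ix) → (Fin l → Ix) → ℂ

/-- Total symmetrisation over `n` spinor indices. -/
def symn {n : ℕ} (f : (Fin n → Ix) → ℂ) (a : Fin n → Ix) : ℂ :=
  (∑ σ : Equiv.Perm (Fin n), f (a ∘ σ)) / (Nat.factorial n : ℂ)

/-- Abstract globally hyperbolic spacetime with spin structure, presented through
its 2-spinor calculus: the spinor covariant derivative `nabla` (acting on spinor
fields of any valence, the two derivative indices being placed first), the Weyl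
curvature spinor (in vacuum the only curvature), and causal/smoothness notions. -/
structure SpinGeom where
  M : Type
  top : TopologicalSpace M
  nabla : ∀ {k l : ℕ}, SpF M k l → SpF M (k+1) (l+1)
  Weyl : M → (Fin 4 → Ix) → ℂ
  weyl_symm : ∀ x (σ : Equiv.Perm (Fin 4)) (a : Fin 4 → Ix), Weyl x (a ∘ σ) = Weyl x a
  nabla_add : ∀ {k l : ℕ} (f g : SpF M k l),
    (nabla fun x a b => f x a b + g x a b) = fun x a b => nabla f x a b + nabla g x a b
  nabla_smul : ∀ {k l : ℕ} (c : ℂ) (f : SpF M k l),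
    (nabla fun x a b => c * f x a b) = fun x a b => c * nabla f x a b
  IsCauchySurface : Set M → Prop
  IsSpacelikeHypersurface : Set M → Prop
  SmoothFn : (M → ℂ) → Prop
  SmoothOn : (M → ℂ) → Set M → Prop

attribute [instance] SpinGeom.top

namespace SpinGeom

variable (G : SpinGeom)

/-- The D'Alembertian □ = ∇_{AA'}∇^{AA'} acting on spinor fields. -/
def box {k l : ℕ} (f : SpF G.M k l) : SpF G.M k l := fun x a b =>
  ∑ A, ∑ B, ∑ A', ∑ B', eps A B * eps A' B' *
    G.nabla (G.nabla f) x (Fin.cons A (Fin.cons B a)) (Fin.cons A' (Fin.cons B' b))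

/-- The complex conjugate Weyl spinor Ψ̄_{A'B'C'D'} (components). -/
def WeylBar : G.M → (Fin 4 → Ix) → ℂ := fun x a => (starRingEnd ℂ) (G.Weyl x a)

end SpinGeom

namespace SpinGeom

variable (G : SpinGeom)

/-- Normal derivative ∇ = τ^{AA'}∇_{AA'} along the normal spinor τ. -/
def nablaN (τ : SpF G.M 1 1) {k l : ℕ} (f : SpF G.M k l) : SpF G.M k l := fun x a b =>
  ∑ A, ∑ A', ∑ B, ∑ B', eps A B * eps A' B' * τ x ![B] ![B'] *
    G.nabla f x (Fin.cons A a) (Fin.cons A' b)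

/-- The Sen connection ∇_{AB} = τ_{(A}{}^{A'}∇_{B)A'}; the two new unprimed indices
are placed first. -/
def sen (τ : SpF G.M 1 1) {k l : ℕ} (f : SpF G.M k l) : SpF G.M (k+2) l := fun x a b =>
  ((∑ A', ∑ B', eps A' B' * τ x ![a 0] ![B'] *
      G.nabla f x (Fin.cons (a 1) fun i => a i.succ.succ) (Fin.cons A' b)) +
   (∑ A', ∑ B', eps A' B' * τ x ![a 1] ![B'] *
      G.nabla f x (Fin.cons (a 0) fun i => a i.succ.succ) (Fin.cons A' b))) / 2

/-- Acceleration spinor K_{AB} = τ_B{}^{A'} ∇τ_{AA'}. -/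
def Kacc (τ : SpF G.M 1 1) : G.M → Ix → Ix → ℂ := fun x A B =>
  ∑ A', ∑ B', eps A' B' * τ x ![B] ![B'] * G.nablaN τ τ x ![A] ![A']

/-- Second-fundamental-form spinor K_{ABCD} = τ_D{}^{C'} ∇_{AB}τ_{CC'}. -/
def Ksff (τ : SpF G.M 1 1) : G.M → Ix → Ix → Ix → Ix → ℂ := fun x A B C D =>
  ∑ C', ∑ E', eps C' E' * τ x ![D] ![E'] * G.sen τ τ x ![A, B, C] ![C']

/-- Trace K^{BF}{}_{BF} of the second fundamental form. -/
def KsffTr (τ : SpF G.M 1 1) : G.M → ℂ := fun x =>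
  ∑ B, ∑ F, ∑ P, ∑ Q, eps B P * eps F Q * G.Ksff τ x P Q B F

/-- Totally symmetric (trace-free) part Ω_{ABCD} = K_{(ABCD)}. -/
def Omg (τ : SpF G.M 1 1) : G.M → (Fin 4 → Ix) → ℂ := fun x a =>
  symn (fun v => G.Ksff τ x (v 0) (v 1) (v 2) (v 3)) a

/-- Space-spinor normal derivative D, obtained from ∇ by the K_{AB}-correction on
each index, so that it maps space spinors to space spinors. -/
def Dn (τ : SpF G.M 1 1) {k : ℕ} (f : SpF G.M k 0) : SpF G.M k 0 := fun x a b =>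
  G.nablaN τ f x a b -
    (1/2) * ∑ i : Fin k, ∑ B, (∑ P, eps B P * G.Kacc τ x (a i) P) *
      f x (Function.update a i B) b

/-- Space-spinor spatial derivative D_{AB}, obtained from the Sen connection by the
K_{ABCD}-correction on each index; the two new indices are placed first. -/
def Dsp (τ : SpF G.M 1 1) {k : ℕ} (f : SpF G.M k 0) : SpF G.M (k+2) 0 := fun x a b =>
  G.sen τ f x a b -
    (1/2) * ∑ i : Fin k, ∑ B, (∑ P, eps B P * G.Ksff τ x (a 0) (a 1) (a i.succ.succ) P) *
      f x (Function.update (fun j => a j.succ.succ) i B) b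

/-- τ-Hermitian conjugate Ψ̂ of the Weyl spinor. -/
def hatWeyl (τ : SpF G.M 1 1) : G.M → (Fin 4 → Ix) → ℂ := fun x a =>
  ∑ b : Fin 4 → Ix,
    (∏ i, ∑ B', eps (b i) B' * τ x ![a i] ![B']) * (starRingEnd ℂ) (G.Weyl x b)

/-- Electric part of the Weyl spinor: E = (Ψ̂ + Ψ)/2. -/
def Efield (τ : SpF G.M 1 1) : G.M → (Fin 4 → Ix) → ℂ := fun x a =>
  (G.hatWeyl τ x a + G.Weyl x a) / 2

/-- Magnetic part of the Weyl spinor: B = i(Ψ̂ − Ψ)/2. -/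
def Bfield (τ : SpF G.M 1 1) : G.M → (Fin 4 → Ix) → ℂ := fun x a =>
  Complex.I * (G.hatWeyl τ x a - G.Weyl x a) / 2

end SpinGeom


lemma aux_eps00 : eps 0 0 = 0 := rfl
lemma aux_eps01 : eps 0 1 = 1 := rfl
lemma aux_eps10 : eps 1 0 = -1 := rfl
lemma aux_eps11 : eps 1 1 = 0 := rfl

lemma aux_cons2 (a b : Ix) : (Fin.cons a ![b] : Fin 2 → Ix) = ![a, b] := rfl
lemma aux_cons1 (a : Ix) : (Fin.cons a ![] : Fin 1 → Ix) = ![a] := rfl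
lemma aux_tail3 (A B C : Ix) : (fun i : Fin 1 => (![A,B,C] : Fin 3 → Ix) i.succ.succ) = ![C] := by
  funext i; fin_cases i; rfl
lemma aux_upd1 (g : Fin 1 → Ix) (c : Ix) : Function.update g 0 c = ![c] := by
  funext i; fin_cases i; simp
lemma aux_vec32 (A B C : Ix) : (![A,B,C] : Fin 3 → Ix) 2 = C := rfl

lemma aux_symn3 (f : (Fin 3 → Ix) → ℂ) (A B C : Ix) : symn f ![A,B,C] =
    (f ![A,B,C] + f ![B,A,C] + f ![C,B,A] + f ![A,C,B] + f ![B,C,A] + f ![C,A,B]) / 6 := by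
  have c1 : ![A,B,C] ∘ ⇑(1 : Equiv.Perm (Fin 3)) = ![A,B,C] := by funext i; fin_cases i <;> rfl
  have c2 : ![A,B,C] ∘ ⇑(Equiv.swap (0:Fin 3) 1) = ![B,A,C] := by funext i; fin_cases i <;> rfl
  have c3 : ![A,B,C] ∘ ⇑(Equiv.swap (0:Fin 3) 2) = ![C,B,A] := by funext i; fin_cases i <;> rfl
  have c4 : ![A,B,C] ∘ ⇑(Equiv.swap (1:Fin 3) 2) = ![A,C,B] := by funext i; fin_cases i <;> rfl
  have c5 : ![A,B,C] ∘ ⇑(finRotate 3) = ![B,C,A] := by funext i; fin_cases i <;> rfl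
  have c6 : ![A,B,C] ∘ ⇑(finRotate 3)⁻¹ = ![C,A,B] := by funext i; fin_cases i <;> rfl
  unfold symn
  rw [show (Finset.univ : Finset (Equiv.Perm (Fin 3))) =
    {1, Equiv.swap 0 1, Equiv.swap 0 2, Equiv.swap 1 2, finRotate 3, (finRotate 3)⁻¹} from by decide]
  rw [Finset.sum_insert (by decide), Finset.sum_insert (by decide), Finset.sum_insert (by decide),
    Finset.sum_insert (by decide), Finset.sum_pair (by decide)]
  rw [c1, c2, c3, c4, c5, c6]
  norm_num [Nat.factorial]
  ring

lemma aux_sen_eval (G : SpinGeom) (τ : SpF G.M 1 1) (κ : SpF G.M 1 0) (x : G.M) (A B C : Ix) :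
    G.sen τ κ x ![A,B,C] ![] =
      (τ x ![A] ![1] * G.nabla κ x ![B,C] ![0] - τ x ![A] ![0] * G.nabla κ x ![B,C] ![1]
       + τ x ![B] ![1] * G.nabla κ x ![A,C] ![0] - τ x ![B] ![0] * G.nabla κ x ![A,C] ![1]) / 2 := by
  simp only [SpinGeom.sen, Fin.sum_univ_two, aux_tail3, Matrix.cons_val_zero, Matrix.cons_val_one,
    Matrix.head_cons, aux_cons2, aux_cons1]
  norm_num [eps]
  ring

lemma aux_nablaN_eval (G : SpinGeom) (τ : SpF G.M 1 1) (κ : SpF G.M 1 0) (x : G.M) (B : Ix) :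
    G.nablaN τ κ x ![B] ![] =
      τ x ![1] ![1] * G.nabla κ x ![0,B] ![0] - τ x ![1] ![0] * G.nabla κ x ![0,B] ![1]
      - τ x ![0] ![1] * G.nabla κ x ![1,B] ![0] + τ x ![0] ![0] * G.nabla κ x ![1,B] ![1] := by
  simp only [SpinGeom.nablaN, Fin.sum_univ_two, aux_cons2, aux_cons1]
  norm_num [eps]
  ring

lemma aux_Dsp_eval (G : SpinGeom) (τ : SpF G.M 1 1) (κ : SpF G.M 1 0) (x : G.M) (A B C : Ix) :
    G.Dsp τ κ x ![A,B,C] ![] = G.sen τ κ x ![A,B,C] ![]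
      - (1/2) * (G.Ksff τ x A B C 1 * κ x ![0] ![] - G.Ksff τ x A B C 0 * κ x ![1] ![]) := by
  simp only [SpinGeom.Dsp, Fin.sum_univ_one, Fin.sum_univ_two, aux_upd1,
    Matrix.cons_val_zero, Matrix.cons_val_one, Matrix.head_cons, aux_eps00, aux_eps01,
    aux_eps10, aux_eps11]
  norm_num
  ring_nf
  rw [mul_comm (κ x ![0] ![]), mul_comm (κ x ![1] ![])]; rfl

lemma aux_KsffAB (G : SpinGeom) (τ : SpF G.M 1 1) (x : G.M) (A B C D : Ix) :
    G.Ksff τ x A B C D = G.Ksff τ x B A C D := by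
  simp only [SpinGeom.Ksff, SpinGeom.sen, Fin.sum_univ_two, aux_tail3, Matrix.cons_val_zero,
    Matrix.cons_val_one, Matrix.head_cons, aux_eps00, aux_eps01, aux_eps10, aux_eps11]
  ring

lemma aux_hd_eval (G : SpinGeom) (τ : SpF G.M 1 1) (x : G.M) :
    (∑ A, ∑ A', ∑ B, ∑ B', τ x ![A] ![A'] * eps A B * eps A' B' * τ x ![B] ![B'])
      = 2*(τ x ![0] ![0] * τ x ![1] ![1]) - 2*(τ x ![0] ![1] * τ x ![1] ![0]) := by
  simp only [Fin.sum_univ_two, aux_eps00, aux_eps01, aux_eps10, aux_eps11]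
  ring

/-- **Orthogonal decomposition of the twistor equation.**
κ_A solves ∇_{A'(A}κ_{B)} = 0 iff
∇κ_B + (2/3)∇_B{}^Qκ_Q = 0 and ∇_{(AB}κ_{C)} = 0; moreover the latter is equivalent
to the spatial twistor equation D_{(AB}κ_{C)} − (1/2)K_{Q(ABC)}κ^Q = 0, which is
intrinsic to the leaves of the foliation. -/
theorem twistor_equation_orthogonal_decomposition (G : SpinGeom)
    (τ : SpF G.M 1 1)
    (hτnorm : ∀ x, (∑ A, ∑ A', ∑ B, ∑ B',
      τ x ![A] ![A'] * eps A B * eps A' B' * τ x ![B] ![B']) = 2)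
    (hτsurf : ∀ x A B C D, G.Ksff τ x A B C D = G.Ksff τ x C D A B)
    (κ : SpF G.M 1 0) :
    ((∀ x A' A B,
        G.nabla κ x ![A, B] ![A'] + G.nabla κ x ![B, A] ![A'] = 0)
      ↔
      ((∀ x B, G.nablaN τ κ x ![B] ![]
          + (2/3) * ∑ Q, ∑ P, eps Q P * G.sen τ κ x ![B, P, Q] ![] = 0)
       ∧
       (∀ x A B C, symn (fun v => G.sen τ κ x v ![]) ![A, B, C] = 0)))
    ∧
    ((∀ x A B C, symn (fun v => G.sen τ κ x v ![]) ![A, B, C] = 0)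
      ↔
      (∀ x A B C,
        symn (fun v => G.Dsp τ κ x v ![]) ![A, B, C]
          - (1/2) * ∑ Q, (symn (fun v => G.Ksff τ x Q (v 0) (v 1) (v 2)) ![A, B, C])
              * (∑ P, eps Q P * κ x ![P] ![]) = 0)) := by
  constructor
  · constructor
    · intro h
      refine ⟨fun x B => ?_, fun x A B C => ?_⟩
      · simp only [Fin.sum_univ_two, aux_eps00, aux_eps01, aux_eps10, aux_eps11,
          aux_nablaN_eval, aux_sen_eval]
        fin_cases B <;> simp only [Fin.mk_zero, Fin.mk_one]
        · linear_combination ((2/3:ℂ) * (τ x ![1] ![1])) * h x 0 0 0 + ((-2/3:ℂ) * (τ x ![0] ![1])) * h x 0 0 1 + ((-2/3:ℂ) * (τ x ![1] ![0])) * h x 1 0 0 + ((2/3:ℂ) * (τ x ![0] ![0])) * h x 1 0 1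
        · linear_combination ((2/3:ℂ) * (τ x ![1] ![1])) * h x 0 0 1 + ((-2/3:ℂ) * (τ x ![0] ![1])) * h x 0 1 1 + ((-2/3:ℂ) * (τ x ![1] ![0])) * h x 1 0 1 + ((2/3:ℂ) * (τ x ![0] ![0])) * h x 1 1 1
      · simp only [aux_symn3, aux_sen_eval]
        fin_cases A <;> fin_cases B <;> fin_cases C <;> simp only [Fin.mk_zero, Fin.mk_one]
        · linear_combination ((1/2:ℂ) * (τ x ![0] ![1])) * h x 0 0 0 + ((-1/2:ℂ) * (τ x ![0] ![0])) * h x 1 0 0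
        · linear_combination ((1/6:ℂ) * (τ x ![1] ![1])) * h x 0 0 0 + ((1/3:ℂ) * (τ x ![0] ![1])) * h x 0 0 1 + ((-1/6:ℂ) * (τ x ![1] ![0])) * h x 1 0 0 + ((-1/3:ℂ) * (τ x ![0] ![0])) * h x 1 0 1
        · linear_combination ((1/6:ℂ) * (τ x ![1] ![1])) * h x 0 0 0 + ((1/3:ℂ) * (τ x ![0] ![1])) * h x 0 0 1 + ((-1/6:ℂ) * (τ x ![1] ![0])) * h x 1 0 0 + ((-1/3:ℂ) * (τ x ![0] ![0])) * h x 1 0 1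
        · linear_combination ((1/3:ℂ) * (τ x ![1] ![1])) * h x 0 0 1 + ((1/6:ℂ) * (τ x ![0] ![1])) * h x 0 1 1 + ((-1/3:ℂ) * (τ x ![1] ![0])) * h x 1 0 1 + ((-1/6:ℂ) * (τ x ![0] ![0])) * h x 1 1 1
        · linear_combination ((1/6:ℂ) * (τ x ![1] ![1])) * h x 0 0 0 + ((1/3:ℂ) * (τ x ![0] ![1])) * h x 0 0 1 + ((-1/6:ℂ) * (τ x ![1] ![0])) * h x 1 0 0 + ((-1/3:ℂ) * (τ x ![0] ![0])) * h x 1 0 1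
        · linear_combination ((1/3:ℂ) * (τ x ![1] ![1])) * h x 0 0 1 + ((1/6:ℂ) * (τ x ![0] ![1])) * h x 0 1 1 + ((-1/3:ℂ) * (τ x ![1] ![0])) * h x 1 0 1 + ((-1/6:ℂ) * (τ x ![0] ![0])) * h x 1 1 1
        · linear_combination ((1/3:ℂ) * (τ x ![1] ![1])) * h x 0 0 1 + ((1/6:ℂ) * (τ x ![0] ![1])) * h x 0 1 1 + ((-1/3:ℂ) * (τ x ![1] ![0])) * h x 1 0 1 + ((-1/6:ℂ) * (τ x ![0] ![0])) * h x 1 1 1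
        · linear_combination ((1/2:ℂ) * (τ x ![1] ![1])) * h x 0 1 1 + ((-1/2:ℂ) * (τ x ![1] ![0])) * h x 1 1 1
    · rintro ⟨h1, h2⟩ x A' A B
      have e10 := h1 x 0
      have e11 := h1 x 1
      simp only [Fin.sum_univ_two, aux_eps00, aux_eps01, aux_eps10, aux_eps11,
        aux_nablaN_eval, aux_sen_eval] at e10 e11
      have e2000 := h2 x 0 0 0
      have e2001 := h2 x 0 0 1
      have e2011 := h2 x 0 1 1
      have e2111 := h2 x 1 1 1
      simp only [aux_symn3, aux_sen_eval] at e2000 e2001 e2011 e2111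
      have hd := hτnorm x
      rw [aux_hd_eval] at hd
      fin_cases A' <;> fin_cases A <;> fin_cases B <;> simp only [Fin.mk_zero, Fin.mk_one]
      · linear_combination ((1:ℂ) * (τ x ![0] ![0]) * (τ x ![0] ![1]) * (τ x ![0] ![1]) * (τ x ![1] ![0]) * (τ x ![1] ![0]) + (-2:ℂ) * (τ x ![0] ![0]) * (τ x ![0] ![0]) * (τ x ![0] ![1]) * (τ x ![1] ![0]) * (τ x ![1] ![1]) + (1:ℂ) * (τ x ![0] ![0]) * (τ x ![0] ![0]) * (τ x ![0] ![0]) * (τ x ![1] ![1]) * (τ x ![1] ![1])) * e10 + ((4:ℂ) * (τ x ![0] ![0]) * (τ x ![0] ![1]) * (τ x ![1] ![0]) * (τ x ![1] ![0]) * (τ x ![1] ![1]) + (-2:ℂ) * (τ x ![0] ![0]) * (τ x ![0] ![0]) * (τ x ![1] ![0]) * (τ x ![1] ![1]) * (τ x ![1] ![1]) + (-2:ℂ) * (τ x ![0] ![1]) * (τ x ![0] ![1]) * (τ x ![1] ![0]) * (τ x ![1] ![0]) * (τ x ![1] ![0])) * e2000 + ((2:ℂ) * (τ x ![0] ![0])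 * (τ x ![0] ![1]) * (τ x ![0] ![1]) * (τ x ![1] ![0]) * (τ x ![1] ![0]) + (-4:ℂ) * (τ x ![0] ![0]) * (τ x ![0] ![0]) * (τ x ![0] ![1]) * (τ x ![1] ![0]) * (τ x ![1] ![1]) + (2:ℂ) * (τ x ![0] ![0]) * (τ x ![0] ![0]) * (τ x ![0] ![0]) * (τ x ![1] ![1]) * (τ x ![1] ![1])) * e2001 + ((-1:ℂ) * (G.nabla κ x ![0, 0] ![0]) + (2:ℂ) * (G.nabla κ x ![0, 0] ![0]) * (τ x ![0] ![0]) * (τ x ![0] ![1]) * (τ x ![1] ![0]) * (τ x ![1] ![1]) + (-1:ℂ) * (G.nabla κ x ![0, 0] ![0]) * (τ x ![0] ![0]) * (τ x ![1] ![1]) + (-1:ℂ) * (G.nabla κ x ![0, 0] ![0]) * (τ x ![0] ![0]) * (τ x ![0] ![0]) * (τ x ![1] ![1]) * (τ x ![1] ![1]) + (1:ℂ) * (G.nabla κ x ![0, 0] ![0]) * (τ x ![0] ![1]) * (τ x ![1] ![0]) + (-1:ℂ) * (G.nabla κ x ![0, 0] ![0]) * (τ x ![0] ![1]) * (τ x ![0]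 ![1]) * (τ x ![1] ![0]) * (τ x ![1] ![0])) * hd
      · linear_combination ((-1:ℂ) * (τ x ![0] ![0]) * (τ x ![0] ![1]) * (τ x ![1] ![0]) * (τ x ![1] ![0]) * (τ x ![1] ![1]) + (1/2:ℂ) * (τ x ![0] ![0]) * (τ x ![0] ![0]) * (τ x ![1] ![0]) * (τ x ![1] ![1]) * (τ x ![1] ![1]) + (1/2:ℂ) * (τ x ![0] ![1]) * (τ x ![0] ![1]) * (τ x ![1] ![0]) * (τ x ![1] ![0]) * (τ x ![1] ![0])) * e10 + ((1/2:ℂ) * (τ x ![0] ![0]) * (τ x ![0] ![1]) * (τ x ![0] ![1]) * (τ x ![1] ![0]) * (τ x ![1] ![0]) + (-1:ℂ) * (τ x ![0] ![0]) * (τ x ![0] ![0]) * (τ x ![0] ![1]) * (τ x ![1] ![0]) * (τ x ![1] ![1]) + (1/2:ℂ) * (τ x ![0] ![0]) * (τ x ![0] ![0]) * (τ x ![0] ![0]) * (τ x ![1] ![1]) * (τ x ![1] ![1])) * e11 + ((4:ℂ) * (τ x ![0] ![0]) * (τ x ![0] ![1]) * (τ x ![1] ![0]) * (τ x ![1] ![0])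 * (τ x ![1] ![1]) + (-2:ℂ) * (τ x ![0] ![0]) * (τ x ![0] ![0]) * (τ x ![1] ![0]) * (τ x ![1] ![1]) * (τ x ![1] ![1]) + (-2:ℂ) * (τ x ![0] ![1]) * (τ x ![0] ![1]) * (τ x ![1] ![0]) * (τ x ![1] ![0]) * (τ x ![1] ![0])) * e2001 + ((2:ℂ) * (τ x ![0] ![0]) * (τ x ![0] ![1]) * (τ x ![0] ![1]) * (τ x ![1] ![0]) * (τ x ![1] ![0]) + (-4:ℂ) * (τ x ![0] ![0]) * (τ x ![0] ![0]) * (τ x ![0] ![1]) * (τ x ![1] ![0]) * (τ x ![1] ![1]) + (2:ℂ) * (τ x ![0] ![0]) * (τ x ![0] ![0]) * (τ x ![0] ![0]) * (τ x ![1] ![1]) * (τ x ![1] ![1])) * e2011 + ((-1/2:ℂ) * (G.nabla κ x ![0, 1] ![0]) + (1:ℂ) * (G.nabla κ x ![0, 1] ![0]) * (τ x ![0] ![0]) * (τ x ![0] ![1]) * (τ x ![1] ![0]) * (τ x ![1] ![1]) + (-1/2:ℂ) * (G.nabla κ x ![0, 1] ![0]) * (τ x ![0] ![0]) * (τ x ![1]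 ![1]) + (-1/2:ℂ) * (G.nabla κ x ![0, 1] ![0]) * (τ x ![0] ![0]) * (τ x ![0] ![0]) * (τ x ![1] ![1]) * (τ x ![1] ![1]) + (1/2:ℂ) * (G.nabla κ x ![0, 1] ![0]) * (τ x ![0] ![1]) * (τ x ![1] ![0]) + (-1/2:ℂ) * (G.nabla κ x ![0, 1] ![0]) * (τ x ![0] ![1]) * (τ x ![0] ![1]) * (τ x ![1] ![0]) * (τ x ![1] ![0]) + (-1/2:ℂ) * (G.nabla κ x ![1, 0] ![0]) + (1:ℂ) * (G.nabla κ x ![1, 0] ![0]) * (τ x ![0] ![0]) * (τ x ![0] ![1]) * (τ x ![1] ![0]) * (τ x ![1] ![1]) + (-1/2:ℂ) * (G.nabla κ x ![1, 0] ![0]) * (τ x ![0] ![0]) * (τ x ![1] ![1]) + (-1/2:ℂ) * (G.nabla κ x ![1, 0] ![0]) * (τ x ![0] ![0]) * (τ x ![0] ![0]) * (τ x ![1] ![1]) * (τ x ![1] ![1]) + (1/2:ℂ) * (G.nabla κ x ![1, 0] ![0]) * (τ x ![0] ![1]) * (τ x ![1] ![0]) + (-1/2:ℂ) * (G.nabla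 κ x ![1, 0] ![0]) * (τ x ![0] ![1]) * (τ x ![0] ![1]) * (τ x ![1] ![0]) * (τ x ![1] ![0])) * hd
      · linear_combination ((-1:ℂ) * (τ x ![0] ![0]) * (τ x ![0] ![1]) * (τ x ![1] ![0]) * (τ x ![1] ![0]) * (τ x ![1] ![1]) + (1/2:ℂ) * (τ x ![0] ![0]) * (τ x ![0] ![0]) * (τ x ![1] ![0]) * (τ x ![1] ![1]) * (τ x ![1] ![1]) + (1/2:ℂ) * (τ x ![0] ![1]) * (τ x ![0] ![1]) * (τ x ![1] ![0]) * (τ x ![1] ![0]) * (τ x ![1] ![0])) * e10 + ((1/2:ℂ) * (τ x ![0] ![0]) * (τ x ![0] ![1]) * (τ x ![0] ![1]) * (τ x ![1] ![0]) * (τ x ![1] ![0]) + (-1:ℂ) * (τ x ![0] ![0]) * (τ x ![0] ![0]) * (τ x ![0] ![1]) * (τ x ![1] ![0]) * (τ x ![1] ![1]) + (1/2:ℂ) * (τ x ![0] ![0]) * (τ x ![0] ![0]) * (τ x ![0] ![0]) * (τ x ![1] ![1]) * (τ x ![1] ![1])) * e11 + ((4:ℂ) * (τ x ![0] ![0]) *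 (τ x ![0] ![1]) * (τ x ![1] ![0]) * (τ x ![1] ![0]) * (τ x ![1] ![1]) + (-2:ℂ) * (τ x ![0] ![0]) * (τ x ![0] ![0]) * (τ x ![1] ![0]) * (τ x ![1] ![1]) * (τ x ![1] ![1]) + (-2:ℂ) * (τ x ![0] ![1]) * (τ x ![0] ![1]) * (τ x ![1] ![0]) * (τ x ![1] ![0]) * (τ x ![1] ![0])) * e2001 + ((2:ℂ) * (τ x ![0] ![0]) * (τ x ![0] ![1]) * (τ x ![0] ![1]) * (τ x ![1] ![0]) * (τ x ![1] ![0]) + (-4:ℂ) * (τ x ![0] ![0]) * (τ x ![0] ![0]) * (τ x ![0] ![1]) * (τ x ![1] ![0]) * (τ x ![1] ![1]) + (2:ℂ) * (τ x ![0] ![0]) * (τ x ![0] ![0]) * (τ x ![0] ![0]) * (τ x ![1] ![1]) * (τ x ![1] ![1])) * e2011 + ((-1/2:ℂ) * (G.nabla κ x ![0, 1] ![0]) + (1:ℂ) * (G.nabla κ x ![0, 1] ![0]) * (τ x ![0] ![0]) * (τ x ![0] ![1]) * (τ x ![1] ![0]) * (τ x ![1] ![1]) + (-1/2:ℂ) *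 (G.nabla κ x ![0, 1] ![0]) * (τ x ![0] ![0]) * (τ x ![1] ![1]) + (-1/2:ℂ) * (G.nabla κ x ![0, 1] ![0]) * (τ x ![0] ![0]) * (τ x ![0] ![0]) * (τ x ![1] ![1]) * (τ x ![1] ![1]) + (1/2:ℂ) * (G.nabla κ x ![0, 1] ![0]) * (τ x ![0] ![1]) * (τ x ![1] ![0]) + (-1/2:ℂ) * (G.nabla κ x ![0, 1] ![0]) * (τ x ![0] ![1]) * (τ x ![0] ![1]) * (τ x ![1] ![0]) * (τ x ![1] ![0]) + (-1/2:ℂ) * (G.nabla κ x ![1, 0] ![0]) + (1:ℂ) * (G.nabla κ x ![1, 0] ![0]) * (τ x ![0] ![0]) * (τ x ![0] ![1]) * (τ x ![1] ![0]) * (τ x ![1] ![1]) + (-1/2:ℂ) * (G.nabla κ x ![1, 0] ![0]) * (τ x ![0] ![0]) * (τ x ![1] ![1]) + (-1/2:ℂ) * (G.nabla κ x ![1, 0] ![0]) * (τ x ![0] ![0]) * (τ x ![0] ![0]) * (τ x ![1] ![1]) * (τ x ![1] ![1]) + (1/2:ℂ) * (G.nabla κ x ![1, 0] ![0]) * (τ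 x ![0] ![1]) * (τ x ![1] ![0]) + (-1/2:ℂ) * (G.nabla κ x ![1, 0] ![0]) * (τ x ![0] ![1]) * (τ x ![0] ![1]) * (τ x ![1] ![0]) * (τ x ![1] ![0])) * hd
      · linear_combination ((-2:ℂ) * (τ x ![0] ![0]) * (τ x ![0] ![1]) * (τ x ![1] ![0]) * (τ x ![1] ![0]) * (τ x ![1] ![1]) + (1:ℂ) * (τ x ![0] ![0]) * (τ x ![0] ![0]) * (τ x ![1] ![0]) * (τ x ![1] ![1]) * (τ x ![1] ![1]) + (1:ℂ) * (τ x ![0] ![1]) * (τ x ![0] ![1]) * (τ x ![1] ![0]) * (τ x ![1] ![0]) * (τ x ![1] ![0])) * e11 + ((4:ℂ) * (τ x ![0] ![0]) * (τ x ![0] ![1]) * (τ x ![1] ![0]) * (τ x ![1] ![0]) * (τ x ![1] ![1]) + (-2:ℂ) * (τ x ![0] ![0]) * (τ x ![0] ![0]) * (τ x ![1] ![0]) * (τ x ![1] ![1]) * (τ x ![1] ![1]) + (-2:ℂ) * (τ x ![0] ![1]) * (τ x ![0] ![1]) * (τ x ![1] ![0]) * (τ x ![1] ![0]) * (τ x ![1]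 ![0])) * e2011 + ((2:ℂ) * (τ x ![0] ![0]) * (τ x ![0] ![1]) * (τ x ![0] ![1]) * (τ x ![1] ![0]) * (τ x ![1] ![0]) + (-4:ℂ) * (τ x ![0] ![0]) * (τ x ![0] ![0]) * (τ x ![0] ![1]) * (τ x ![1] ![0]) * (τ x ![1] ![1]) + (2:ℂ) * (τ x ![0] ![0]) * (τ x ![0] ![0]) * (τ x ![0] ![0]) * (τ x ![1] ![1]) * (τ x ![1] ![1])) * e2111 + ((-1:ℂ) * (G.nabla κ x ![1, 1] ![0]) + (2:ℂ) * (G.nabla κ x ![1, 1] ![0]) * (τ x ![0] ![0]) * (τ x ![0] ![1]) * (τ x ![1] ![0]) * (τ x ![1] ![1]) + (-1:ℂ) * (G.nabla κ x ![1, 1] ![0]) * (τ x ![0] ![0]) * (τ x ![1] ![1]) + (-1:ℂ) * (G.nabla κ x ![1, 1] ![0]) * (τ x ![0] ![0]) * (τ x ![0] ![0]) * (τ x ![1] ![1]) * (τ x ![1] ![1]) + (1:ℂ) * (G.nabla κ x ![1, 1] ![0]) * (τ x ![0] ![1]) * (τ x ![1] ![0]) + (-1:ℂ) * (G.nabla κ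 x ![1, 1] ![0]) * (τ x ![0] ![1]) * (τ x ![0] ![1]) * (τ x ![1] ![0]) * (τ x ![1] ![0])) * hd
      · linear_combination ((-2:ℂ) * (τ x ![0] ![0]) * (τ x ![0] ![1]) * (τ x ![0] ![1]) * (τ x ![1] ![0]) * (τ x ![1] ![1]) + (1:ℂ) * (τ x ![0] ![0]) * (τ x ![0] ![0]) * (τ x ![0] ![1]) * (τ x ![1] ![1]) * (τ x ![1] ![1]) + (1:ℂ) * (τ x ![0] ![1]) * (τ x ![0] ![1]) * (τ x ![0] ![1]) * (τ x ![1] ![0]) * (τ x ![1] ![0])) * e10 + ((4:ℂ) * (τ x ![0] ![0]) * (τ x ![0] ![1]) * (τ x ![1] ![0]) * (τ x ![1] ![1]) * (τ x ![1] ![1]) + (-2:ℂ) * (τ x ![0] ![0]) * (τ x ![0] ![0]) * (τ x ![1] ![1]) * (τ x ![1] ![1]) * (τ x ![1] ![1]) + (-2:ℂ) * (τ x ![0] ![1]) * (τ x ![0] ![1]) * (τ x ![1] ![0]) * (τ x ![1] ![0]) * (τ x ![1] ![1])) * e2000 + ((-4:ℂ) * (τ x ![0] ![0]) * (τ x ![0]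 ![1]) * (τ x ![0] ![1]) * (τ x ![1] ![0]) * (τ x ![1] ![1]) + (2:ℂ) * (τ x ![0] ![0]) * (τ x ![0] ![0]) * (τ x ![0] ![1]) * (τ x ![1] ![1]) * (τ x ![1] ![1]) + (2:ℂ) * (τ x ![0] ![1]) * (τ x ![0] ![1]) * (τ x ![0] ![1]) * (τ x ![1] ![0]) * (τ x ![1] ![0])) * e2001 + ((-1:ℂ) * (G.nabla κ x ![0, 0] ![1]) + (2:ℂ) * (G.nabla κ x ![0, 0] ![1]) * (τ x ![0] ![0]) * (τ x ![0] ![1]) * (τ x ![1] ![0]) * (τ x ![1] ![1]) + (-1:ℂ) * (G.nabla κ x ![0, 0] ![1]) * (τ x ![0] ![0]) * (τ x ![1] ![1]) + (-1:ℂ) * (G.nabla κ x ![0, 0] ![1]) * (τ x ![0] ![0]) * (τ x ![0] ![0]) * (τ x ![1] ![1]) * (τ x ![1] ![1]) + (1:ℂ) * (G.nabla κ x ![0, 0] ![1]) * (τ x ![0] ![1]) * (τ x ![1] ![0]) + (-1:ℂ) * (G.nabla κ x ![0, 0] ![1]) * (τ x ![0] ![1]) * (τ x ![0] ![1]) * (τ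 x ![1] ![0]) * (τ x ![1] ![0])) * hd
      · linear_combination ((-1:ℂ) * (τ x ![0] ![0]) * (τ x ![0] ![1]) * (τ x ![1] ![0]) * (τ x ![1] ![1]) * (τ x ![1] ![1]) + (1/2:ℂ) * (τ x ![0] ![0]) * (τ x ![0] ![0]) * (τ x ![1] ![1]) * (τ x ![1] ![1]) * (τ x ![1] ![1]) + (1/2:ℂ) * (τ x ![0] ![1]) * (τ x ![0] ![1]) * (τ x ![1] ![0]) * (τ x ![1] ![0]) * (τ x ![1] ![1])) * e10 + ((-1:ℂ) * (τ x ![0] ![0]) * (τ x ![0] ![1]) * (τ x ![0] ![1]) * (τ x ![1] ![0]) * (τ x ![1] ![1]) + (1/2:ℂ) * (τ x ![0] ![0]) * (τ x ![0] ![0]) * (τ x ![0] ![1]) * (τ x ![1] ![1]) * (τ x ![1] ![1]) + (1/2:ℂ) * (τ x ![0] ![1]) * (τ x ![0] ![1]) * (τ x ![0] ![1]) * (τ x ![1] ![0]) * (τ x ![1] ![0])) * e11 + ((4:ℂ) * (τ x ![0] ![0]) * (τ x ![0] ![1]) * (τ x ![1] ![0]) * (τ x ![1] ![1]) * (τ x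 ![1] ![1]) + (-2:ℂ) * (τ x ![0] ![0]) * (τ x ![0] ![0]) * (τ x ![1] ![1]) * (τ x ![1] ![1]) * (τ x ![1] ![1]) + (-2:ℂ) * (τ x ![0] ![1]) * (τ x ![0] ![1]) * (τ x ![1] ![0]) * (τ x ![1] ![0]) * (τ x ![1] ![1])) * e2001 + ((-4:ℂ) * (τ x ![0] ![0]) * (τ x ![0] ![1]) * (τ x ![0] ![1]) * (τ x ![1] ![0]) * (τ x ![1] ![1]) + (2:ℂ) * (τ x ![0] ![0]) * (τ x ![0] ![0]) * (τ x ![0] ![1]) * (τ x ![1] ![1]) * (τ x ![1] ![1]) + (2:ℂ) * (τ x ![0] ![1]) * (τ x ![0] ![1]) * (τ x ![0] ![1]) * (τ x ![1] ![0]) * (τ x ![1] ![0])) * e2011 + ((-1/2:ℂ) * (G.nabla κ x ![0, 1] ![1]) + (1:ℂ) * (G.nabla κ x ![0, 1] ![1]) * (τ x ![0] ![0]) * (τ x ![0] ![1]) * (τ x ![1] ![0]) * (τ x ![1] ![1]) + (-1/2:ℂ) * (G.nabla κ x ![0, 1] ![1]) * (τ x ![0] ![0]) * (τ x ![1] ![1])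 + (-1/2:ℂ) * (G.nabla κ x ![0, 1] ![1]) * (τ x ![0] ![0]) * (τ x ![0] ![0]) * (τ x ![1] ![1]) * (τ x ![1] ![1]) + (1/2:ℂ) * (G.nabla κ x ![0, 1] ![1]) * (τ x ![0] ![1]) * (τ x ![1] ![0]) + (-1/2:ℂ) * (G.nabla κ x ![0, 1] ![1]) * (τ x ![0] ![1]) * (τ x ![0] ![1]) * (τ x ![1] ![0]) * (τ x ![1] ![0]) + (-1/2:ℂ) * (G.nabla κ x ![1, 0] ![1]) + (1:ℂ) * (G.nabla κ x ![1, 0] ![1]) * (τ x ![0] ![0]) * (τ x ![0] ![1]) * (τ x ![1] ![0]) * (τ x ![1] ![1]) + (-1/2:ℂ) * (G.nabla κ x ![1, 0] ![1]) * (τ x ![0] ![0]) * (τ x ![1] ![1]) + (-1/2:ℂ) * (G.nabla κ x ![1, 0] ![1]) * (τ x ![0] ![0]) * (τ x ![0] ![0]) * (τ x ![1] ![1]) * (τ x ![1] ![1]) + (1/2:ℂ) * (G.nabla κ x ![1, 0] ![1]) * (τ x ![0] ![1]) * (τ x ![1] ![0]) + (-1/2:ℂ) * (G.nabla κ x ![1,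 0] ![1]) * (τ x ![0] ![1]) * (τ x ![0] ![1]) * (τ x ![1] ![0]) * (τ x ![1] ![0])) * hd
      · linear_combination ((-1:ℂ) * (τ x ![0] ![0]) * (τ x ![0] ![1]) * (τ x ![1] ![0]) * (τ x ![1] ![1]) * (τ x ![1] ![1]) + (1/2:ℂ) * (τ x ![0] ![0]) * (τ x ![0] ![0]) * (τ x ![1] ![1]) * (τ x ![1] ![1]) * (τ x ![1] ![1]) + (1/2:ℂ) * (τ x ![0] ![1]) * (τ x ![0] ![1]) * (τ x ![1] ![0]) * (τ x ![1] ![0]) * (τ x ![1] ![1])) * e10 + ((-1:ℂ) * (τ x ![0] ![0]) * (τ x ![0] ![1]) * (τ x ![0] ![1]) * (τ x ![1] ![0]) * (τ x ![1] ![1]) + (1/2:ℂ) * (τ x ![0] ![0]) * (τ x ![0] ![0]) * (τ x ![0] ![1]) * (τ x ![1] ![1]) * (τ x ![1] ![1]) + (1/2:ℂ) * (τ x ![0] ![1]) * (τ x ![0] ![1]) * (τ x ![0] ![1]) * (τ x ![1] ![0]) * (τ x ![1] ![0])) * e11 + ((4:ℂ) * (τ x ![0] ![0]) * (τ x ![0]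 ![1]) * (τ x ![1] ![0]) * (τ x ![1] ![1]) * (τ x ![1] ![1]) + (-2:ℂ) * (τ x ![0] ![0]) * (τ x ![0] ![0]) * (τ x ![1] ![1]) * (τ x ![1] ![1]) * (τ x ![1] ![1]) + (-2:ℂ) * (τ x ![0] ![1]) * (τ x ![0] ![1]) * (τ x ![1] ![0]) * (τ x ![1] ![0]) * (τ x ![1] ![1])) * e2001 + ((-4:ℂ) * (τ x ![0] ![0]) * (τ x ![0] ![1]) * (τ x ![0] ![1]) * (τ x ![1] ![0]) * (τ x ![1] ![1]) + (2:ℂ) * (τ x ![0] ![0]) * (τ x ![0] ![0]) * (τ x ![0] ![1]) * (τ x ![1] ![1]) * (τ x ![1] ![1]) + (2:ℂ) * (τ x ![0] ![1]) * (τ x ![0] ![1]) * (τ x ![0] ![1]) * (τ x ![1] ![0]) * (τ x ![1] ![0])) * e2011 + ((-1/2:ℂ) * (G.nabla κ x ![0, 1] ![1]) + (1:ℂ) * (G.nabla κ x ![0, 1] ![1]) * (τ x ![0] ![0]) * (τ x ![0] ![1]) * (τ x ![1] ![0]) * (τ x ![1] ![1]) + (-1/2:ℂ) * (G.nabla κ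 x ![0, 1] ![1]) * (τ x ![0] ![0]) * (τ x ![1] ![1]) + (-1/2:ℂ) * (G.nabla κ x ![0, 1] ![1]) * (τ x ![0] ![0]) * (τ x ![0] ![0]) * (τ x ![1] ![1]) * (τ x ![1] ![1]) + (1/2:ℂ) * (G.nabla κ x ![0, 1] ![1]) * (τ x ![0] ![1]) * (τ x ![1] ![0]) + (-1/2:ℂ) * (G.nabla κ x ![0, 1] ![1]) * (τ x ![0] ![1]) * (τ x ![0] ![1]) * (τ x ![1] ![0]) * (τ x ![1] ![0]) + (-1/2:ℂ) * (G.nabla κ x ![1, 0] ![1]) + (1:ℂ) * (G.nabla κ x ![1, 0] ![1]) * (τ x ![0] ![0]) * (τ x ![0] ![1]) * (τ x ![1] ![0]) * (τ x ![1] ![1]) + (-1/2:ℂ) * (G.nabla κ x ![1, 0] ![1]) * (τ x ![0] ![0]) * (τ x ![1] ![1]) + (-1/2:ℂ) * (G.nabla κ x ![1, 0] ![1]) * (τ x ![0] ![0]) * (τ x ![0] ![0]) * (τ x ![1] ![1]) * (τ x ![1] ![1]) + (1/2:ℂ) * (G.nabla κ x ![1, 0] ![1]) * (τ x ![0] ![1])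 * (τ x ![1] ![0]) + (-1/2:ℂ) * (G.nabla κ x ![1, 0] ![1]) * (τ x ![0] ![1]) * (τ x ![0] ![1]) * (τ x ![1] ![0]) * (τ x ![1] ![0])) * hd
      · linear_combination ((-2:ℂ) * (τ x ![0] ![0]) * (τ x ![0] ![1]) * (τ x ![1] ![0]) * (τ x ![1] ![1]) * (τ x ![1] ![1]) + (1:ℂ) * (τ x ![0] ![0]) * (τ x ![0] ![0]) * (τ x ![1] ![1]) * (τ x ![1] ![1]) * (τ x ![1] ![1]) + (1:ℂ) * (τ x ![0] ![1]) * (τ x ![0] ![1]) * (τ x ![1] ![0]) * (τ x ![1] ![0]) * (τ x ![1] ![1])) * e11 + ((4:ℂ) * (τ x ![0] ![0]) * (τ x ![0] ![1]) * (τ x ![1] ![0]) * (τ x ![1] ![1]) * (τ x ![1] ![1]) + (-2:ℂ) * (τ x ![0] ![0]) * (τ x ![0] ![0]) * (τ x ![1] ![1]) * (τ x ![1] ![1]) * (τ x ![1] ![1]) + (-2:ℂ) * (τ x ![0] ![1]) * (τ x ![0] ![1]) * (τ x ![1] ![0]) * (τ x ![1] ![0]) * (τ x ![1] ![1])) * e2011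 + ((-4:ℂ) * (τ x ![0] ![0]) * (τ x ![0] ![1]) * (τ x ![0] ![1]) * (τ x ![1] ![0]) * (τ x ![1] ![1]) + (2:ℂ) * (τ x ![0] ![0]) * (τ x ![0] ![0]) * (τ x ![0] ![1]) * (τ x ![1] ![1]) * (τ x ![1] ![1]) + (2:ℂ) * (τ x ![0] ![1]) * (τ x ![0] ![1]) * (τ x ![0] ![1]) * (τ x ![1] ![0]) * (τ x ![1] ![0])) * e2111 + ((-1:ℂ) * (G.nabla κ x ![1, 1] ![1]) + (2:ℂ) * (G.nabla κ x ![1, 1] ![1]) * (τ x ![0] ![0]) * (τ x ![0] ![1]) * (τ x ![1] ![0]) * (τ x ![1] ![1]) + (-1:ℂ) * (G.nabla κ x ![1, 1] ![1]) * (τ x ![0] ![0]) * (τ x ![1] ![1]) + (-1:ℂ) * (G.nabla κ x ![1, 1] ![1]) * (τ x ![0] ![0]) * (τ x ![0] ![0]) * (τ x ![1] ![1]) * (τ x ![1] ![1]) + (1:ℂ) * (G.nabla κ x ![1, 1] ![1]) * (τ x ![0] ![1]) * (τ x ![1] ![0]) + (-1:ℂ) * (G.nabla κ x ![1, 1] ![1])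 * (τ x ![0] ![1]) * (τ x ![0] ![1]) * (τ x ![1] ![0]) * (τ x ![1] ![0])) * hd
  · have key : ∀ x A B C,
        symn (fun v => G.Dsp τ κ x v ![]) ![A, B, C]
          - (1/2) * ∑ Q, (symn (fun v => G.Ksff τ x Q (v 0) (v 1) (v 2)) ![A, B, C])
              * (∑ P, eps Q P * κ x ![P] ![])
          = symn (fun v => G.sen τ κ x v ![]) ![A, B, C] := by
      intro x A B C
      have ksAB : ∀ a b c d : Ix, G.Ksff τ x a b c d = G.Ksff τ x b a c d :=
        fun a b c d => aux_KsffAB G τ x a b c d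
      simp only [Fin.sum_univ_two, aux_eps00, aux_eps01, aux_eps10, aux_eps11,
        aux_symn3, aux_Dsp_eval, Matrix.cons_val_zero, Matrix.cons_val_one,
        Matrix.head_cons, aux_vec32]
      fin_cases A <;> fin_cases B <;> fin_cases C <;> simp only [Fin.mk_zero, Fin.mk_one]
      · linear_combination (-1/2:ℂ) * (κ x ![0] ![]) * (hτsurf x 0 0 0 1) + (-1/2:ℂ) * (κ x ![0] ![]) * (ksAB 0 1 0 0)
      · linear_combination (-1/6:ℂ) * (κ x ![1] ![]) * (hτsurf x 0 0 0 1) + (-1/6:ℂ) * (κ x ![0] ![]) * (hτsurf x 0 0 1 1) + (-1/6:ℂ) * (κ x ![1] ![]) * (ksAB 0 1 0 0) + (-1/6:ℂ) * (κ x ![0] ![]) * (ksAB 0 1 0 1) + (1/6:ℂ) * (κ x ![0] ![]) * (hτsurf x 0 1 1 0) + (-1/6:ℂ) * (κ x ![0] ![]) * (ksAB 0 1 1 0)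
      · linear_combination (-1/6:ℂ) * (κ x ![1] ![]) * (hτsurf x 0 0 0 1) + (-1/6:ℂ) * (κ x ![0] ![]) * (hτsurf x 0 0 1 1) + (-1/6:ℂ) * (κ x ![1] ![]) * (ksAB 0 1 0 0) + (-1/6:ℂ) * (κ x ![0] ![]) * (ksAB 0 1 0 1) + (1/6:ℂ) * (κ x ![0] ![]) * (hτsurf x 0 1 1 0) + (-1/6:ℂ) * (κ x ![0] ![]) * (ksAB 0 1 1 0)
      · linear_combination (-1/6:ℂ) * (κ x ![1] ![]) * (hτsurf x 0 0 1 1) + (-1/6:ℂ) * (κ x ![1] ![]) * (ksAB 0 1 0 1) + (1/6:ℂ) * (κ x ![1] ![]) * (hτsurf x 0 1 1 0) + (-1/6:ℂ) * (κ x ![1] ![]) * (ksAB 0 1 1 0) + (-1/6:ℂ) * (κ x ![0] ![]) * (ksAB 0 1 1 1) + (-1/6:ℂ) * (κ x ![0] ![]) * (hτsurf x 1 0 1 1)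
      · linear_combination (-1/6:ℂ) * (κ x ![1] ![]) * (hτsurf x 0 0 0 1) + (-1/6:ℂ) * (κ x ![0] ![]) * (hτsurf x 0 0 1 1) + (-1/6:ℂ) * (κ x ![1] ![]) * (ksAB 0 1 0 0) + (-1/6:ℂ) * (κ x ![0] ![]) * (ksAB 0 1 0 1) + (1/6:ℂ) * (κ x ![0] ![]) * (hτsurf x 0 1 1 0) + (-1/6:ℂ) * (κ x ![0] ![]) * (ksAB 0 1 1 0)
      · linear_combination (-1/6:ℂ) * (κ x ![1] ![]) * (hτsurf x 0 0 1 1) + (-1/6:ℂ) * (κ x ![1] ![]) * (ksAB 0 1 0 1) + (1/6:ℂ) * (κ x ![1] ![]) * (hτsurf x 0 1 1 0) + (-1/6:ℂ) * (κ x ![1] ![]) * (ksAB 0 1 1 0) + (-1/6:ℂ) * (κ x ![0] ![]) * (ksAB 0 1 1 1) + (-1/6:ℂ) * (κ x ![0] ![]) * (hτsurf x 1 0 1 1)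
      · linear_combination (-1/6:ℂ) * (κ x ![1] ![]) * (hτsurf x 0 0 1 1) + (-1/6:ℂ) * (κ x ![1] ![]) * (ksAB 0 1 0 1) + (1/6:ℂ) * (κ x ![1] ![]) * (hτsurf x 0 1 1 0) + (-1/6:ℂ) * (κ x ![1] ![]) * (ksAB 0 1 1 0) + (-1/6:ℂ) * (κ x ![0] ![]) * (ksAB 0 1 1 1) + (-1/6:ℂ) * (κ x ![0] ![]) * (hτsurf x 1 0 1 1)
      · linear_combination (-1/2:ℂ) * (κ x ![1] ![]) * (ksAB 0 1 1 1) + (-1/2:ℂ) * (κ x ![1] ![]) * (hτsurf x 1 0 1 1)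
    constructor
    · intro h x A B C
      rw [key x A B C]
      exact h x A B C
    · intro h x A B C
      have hh := h x A B C
      rw [key x A B C] at hh
      exact hh
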